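/- Let H_b ∈ ℂ^{N_r×N_t} and H_e ∈ ℂ^{N_e×N_t} be complex matrices such that Δ := H_bᴴH_b − H_eᴴH_e is positive semidefinite, let X ∈ ℂ^{N_t×N_t} be Hermitian positive semidefinite, and let Y ∈ ℂ^{N_t×N_t} be Hermitian positive semidefinite. If the 2×2 block matrix [[I + Δ^{1/2} X Δ^{1/2} − Y, Δ^{1/2} X H_eᴴ], [H_e X Δ^{1/2}, I + H_e X H_eᴴ]] is positive semidefinite, then det Y ≤ det(I + H_b X H_bᴴ) / det(I + H_e X H_eᴴ). -/

import Mathlib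

open Matrix
open scoped ComplexOrder

/-- The square root of a positive semidefinite matrix, as `Matrix.PosSemidef.sqrt` was defined
in Mathlib (December 2024); the definition has since been removed from Mathlib. -/
noncomputable def Matrix.PosSemidef.sqrt {n : Type*} [Fintype n] [DecidableEq n] {𝕜 : Type*} [RCLike 𝕜]
    {A : Matrix n n 𝕜} (hA : A.PosSemidef) : Matrix n n 𝕜 :=
  hA.1.eigenvectorUnitary.1 * diagonal ((↑) ∘ (√·) ∘ hA.1.eigenvalues) *
    (star hA.1.eigenvectorUnitary : Matrix n n 𝕜)

lemma Matrix.PosSemidef.posSemidef_sqrt {n : Type*} [Fintype n] [DecidableEq n] {𝕜 : Type*}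
    [RCLike 𝕜] {A : Matrix n n 𝕜} (hA : A.PosSemidef) : hA.sqrt.PosSemidef := by
  unfold Matrix.PosSemidef.sqrt
  rw [show (star hA.1.eigenvectorUnitary : Matrix n n 𝕜)
    = (hA.1.eigenvectorUnitary : Matrix n n 𝕜)ᴴ from rfl]
  apply PosSemidef.mul_mul_conjTranspose_same
  refine posSemidef_diagonal_iff.mpr fun i => ?_
  exact RCLike.ofReal_nonneg.mpr (Real.sqrt_nonneg _)

lemma Matrix.PosSemidef.sqrt_mul_self {n : Type*} [Fintype n] [DecidableEq n] {𝕜 : Type*}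
    [RCLike 𝕜] {A : Matrix n n 𝕜} (hA : A.PosSemidef) : hA.sqrt * hA.sqrt = A := by
  unfold Matrix.PosSemidef.sqrt
  have hC : (star hA.1.eigenvectorUnitary : Matrix n n 𝕜) * hA.1.eigenvectorUnitary.1 = 1 :=
    mem_unitaryGroup_iff'.mp hA.1.eigenvectorUnitary.2
  calc _ = hA.1.eigenvectorUnitary.1 * (diagonal ((↑) ∘ (√·) ∘ hA.1.eigenvalues) *
        ((star hA.1.eigenvectorUnitary : Matrix n n 𝕜) * hA.1.eigenvectorUnitary.1) *
        diagonal ((↑) ∘ (√·) ∘ hA.1.eigenvalues)) *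
        (star hA.1.eigenvectorUnitary : Matrix n n 𝕜) := by simp only [Matrix.mul_assoc]
    _ = hA.1.eigenvectorUnitary.1 * diagonal (RCLike.ofReal ∘ hA.1.eigenvalues) *
        (star hA.1.eigenvectorUnitary : Matrix n n 𝕜) := by
      rw [hC, Matrix.mul_one, diagonal_mul_diagonal]
      refine congrArg (fun d => hA.1.eigenvectorUnitary.1 * diagonal d *
        (star hA.1.eigenvectorUnitary : Matrix n n 𝕜)) ?_
      funext i
      simp only [Function.comp_apply, ← RCLike.ofReal_mul,
        Real.mul_self_sqrt (hA.eigenvalues_nonneg i)]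
    _ = A := hA.1.spectral_theorem.symm

lemma aux_det_nonneg {n : Type*} [Fintype n] [DecidableEq n]
    {M : Matrix n n ℂ} (hM : M.PosSemidef) : 0 ≤ M.det := by
  rw [hM.1.det_eq_prod_eigenvalues]
  exact Finset.prod_nonneg fun i _ => RCLike.ofReal_nonneg.mpr (hM.eigenvalues_nonneg i)

lemma aux_one_le_det_one_add {n : Type*} [Fintype n] [DecidableEq n]
    {M : Matrix n n ℂ} (hM : M.PosSemidef) : 1 ≤ (1 + M).det := by
  have hU : (hM.1.eigenvectorUnitary : Matrix n n ℂ) *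
      star (hM.1.eigenvectorUnitary : Matrix n n ℂ) = 1 :=
    mem_unitaryGroup_iff.mp hM.1.eigenvectorUnitary.2
  have h1 : (1 : Matrix n n ℂ) + M
      = (hM.1.eigenvectorUnitary : Matrix n n ℂ) *
        (1 + diagonal (RCLike.ofReal ∘ hM.1.eigenvalues)) *
        star (hM.1.eigenvectorUnitary : Matrix n n ℂ) := by
    rw [mul_add, add_mul, mul_one, hU]; exact congrArg (1 + ·) hM.1.spectral_theorem
  rw [h1, det_mul_right_comm, hU, one_mul]
  rw [show (1 : Matrix n n ℂ) + diagonal (RCLike.ofReal ∘ hM.1.eigenvalues)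
    = diagonal (fun i => 1 + (hM.1.eigenvalues i : ℂ)) by
      rw [← diagonal_one, diagonal_add]; rfl]
  rw [det_diagonal]
  calc (1:ℂ) = ∏ _i : n, 1 := by simp
  _ ≤ ∏ i, (1 + (hM.1.eigenvalues i : ℂ)) :=
    Finset.prod_le_prod (fun i _ => zero_le_one)
      (fun i _ => le_add_of_nonneg_right (RCLike.ofReal_nonneg.mpr (hM.eigenvalues_nonneg i)))

lemma aux_posDef_of_det_ne_zero {n : Type*} [Fintype n] [DecidableEq n]
    {A : Matrix n n ℂ} (hA : A.PosSemidef) (h : A.det ≠ 0) : A.PosDef := by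
  refine posDef_iff_dotProduct_mulVec.mpr ⟨hA.1, fun x hx => ?_⟩
  have hs := hA.sqrt_mul_self
  have hdet : hA.sqrt.det ≠ 0 := by
    intro h0
    exact h (by rw [← hs, det_mul, h0, mul_zero])
  have hinj : Function.Injective hA.sqrt.mulVec :=
    mulVec_injective_iff_isUnit.mpr ((isUnit_iff_isUnit_det _).mpr hdet.isUnit)
  have hy : hA.sqrt *ᵥ x ≠ 0 := (hinj.ne_iff' (mulVec_zero _)).mpr hx
  have key : star x ⬝ᵥ (hA.sqrt * hA.sqrt) *ᵥ x = star (hA.sqrt *ᵥ x) ⬝ᵥ (hA.sqrt *ᵥ x) := by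
    rw [star_mulVec, ← mulVec_mulVec, dotProduct_mulVec, hA.posSemidef_sqrt.1]
  rw [hs] at key
  rw [key]
  exact dotProduct_star_self_pos_iff.mpr hy

lemma aux_det_mono {n : Type*} [Fintype n] [DecidableEq n]
    {A B : Matrix n n ℂ} (hA : A.PosSemidef) (hBA : (B - A).PosSemidef) :
    A.det ≤ B.det := by
  have hB : B.PosSemidef := by simpa using hA.add hBA
  by_cases h : A.det = 0
  · rw [h]; exact aux_det_nonneg hB
  · have hApd := aux_posDef_of_det_ne_zero hA h
    set S := hA.sqrt with hSdef
    have hs := hA.sqrt_mul_self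
    have hdet : S.det ≠ 0 := fun h0 => h (by rw [← hs, det_mul, h0, mul_zero])
    have hU : IsUnit S.det := hdet.isUnit
    have h1 : S * S⁻¹ = 1 := mul_nonsing_inv S hU
    have h2 : S⁻¹ * S = 1 := nonsing_inv_mul S hU
    have hM : (S⁻¹ * (B - A) * S⁻¹).PosSemidef := by
      have := hBA.conjTranspose_mul_mul_same S⁻¹
      rwa [conjTranspose_nonsing_inv, hA.posSemidef_sqrt.1] at this
    have key : B = S * (1 + S⁻¹ * (B - A) * S⁻¹) * S := by
      rw [mul_add, add_mul, mul_one, hs]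
      have : S * (S⁻¹ * (B - A) * S⁻¹) * S = B - A := by
        rw [← Matrix.mul_assoc, ← Matrix.mul_assoc, h1, one_mul, Matrix.mul_assoc, h2, mul_one]
      rw [this, add_sub_cancel]
    have hdetA : A.det = S.det * S.det := by rw [← hs, det_mul]
    have hBdet : B.det = A.det * (1 + S⁻¹ * (B - A) * S⁻¹).det := by
      conv_lhs => rw [key]
      rw [det_mul, det_mul, hdetA]; ring
    calc A.det = A.det * 1 := (mul_one _).symm
    _ ≤ A.det * (1 + S⁻¹ * (B - A) * S⁻¹).det :=
        mul_le_mul_of_nonneg_left (aux_one_le_det_one_add hM) hApd.det_pos.le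
    _ = B.det := hBdet.symm

/-- one direction of Lemma 1 of the paper: feasibility of the
linear matrix inequality implies `det Y` is at most the secrecy-rate
determinant ratio. -/
theorem stmt_3 {Nr Nt Ne : ℕ}
    (Hb : Matrix (Fin Nr) (Fin Nt) ℂ) (He : Matrix (Fin Ne) (Fin Nt) ℂ)
    (X : Matrix (Fin Nt) (Fin Nt) ℂ) (hX : X.PosSemidef)
    (hΔ : (Hbᴴ * Hb - Heᴴ * He).PosSemidef)
    (Y : Matrix (Fin Nt) (Fin Nt) ℂ) (hY : Y.PosSemidef)
    (hblk : (Matrix.fromBlocks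
        (1 + hΔ.sqrt * X * hΔ.sqrt - Y) (hΔ.sqrt * X * Heᴴ)
        (He * X * hΔ.sqrt) (1 + He * X * Heᴴ)).PosSemidef) :
    Y.det ≤ (1 + Hb * X * Hbᴴ).det / (1 + He * X * Heᴴ).det := by
  set S := hΔ.sqrt with hSdef
  have hSh : Sᴴ = S := hΔ.posSemidef_sqrt.1
  have hXh : Xᴴ = X := hX.1
  set D := 1 + He * X * Heᴴ with hDdef
  have hD : D.PosDef := Matrix.PosDef.one.add_posSemidef (hX.mul_mul_conjTranspose_same He)
  haveI : Invertible D := hD.isUnit.invertible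
  have hBH : (S * X * Heᴴ)ᴴ = He * X * S := by
    rw [conjTranspose_mul, conjTranspose_mul, conjTranspose_conjTranspose, hXh, hSh,
      Matrix.mul_assoc]
  have hblk' : (fromBlocks (1 + S * X * S - Y) (S * X * Heᴴ) ((S * X * Heᴴ)ᴴ) D).PosSemidef := by
    rw [hBH]; exact hblk
  have hSchur := (PosDef.fromBlocks₂₂ _ _ hD).mp hblk'
  set K := 1 + S * X * S - S * X * Heᴴ * D⁻¹ * (S * X * Heᴴ)ᴴ with hKdef
  have hKY : (K - Y).PosSemidef := by
    have : K - Y = 1 + S * X * S - Y - S * X * Heᴴ * D⁻¹ * (S * X * Heᴴ)ᴴ := by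
      rw [hKdef]; abel
    rw [this]; exact hSchur
  have hdY : Y.det ≤ K.det := aux_det_mono hY hKY
  -- determinant computation
  have hfull : fromBlocks (1 + S * X * S) (S * X * Heᴴ) ((S * X * Heᴴ)ᴴ) D
      = 1 + (fromRows S He * X) * (fromRows S He)ᴴ := by
    rw [conjTranspose_fromRows_eq_fromCols_conjTranspose, fromRows_mul,
      fromRows_mul_fromCols, ← fromBlocks_one, fromBlocks_add, hBH, hSh,
      zero_add, zero_add, ← hDdef]
  have hCC : (fromRows S He)ᴴ * fromRows S He = Hbᴴ * Hb := by
    rw [conjTranspose_fromRows_eq_fromCols_conjTranspose, fromCols_mul_fromRows, hSh]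
    rw [show S * S = Hbᴴ * Hb - Heᴴ * He from hΔ.sqrt_mul_self, sub_add_cancel]
  have hdet1 : (fromBlocks (1 + S * X * S) (S * X * Heᴴ) ((S * X * Heᴴ)ᴴ) D).det
      = (1 + Hb * X * Hbᴴ).det := by
    rw [hfull, det_one_add_mul_comm, ← Matrix.mul_assoc, hCC,
      show Hbᴴ * Hb * X = Hbᴴ * (Hb * X) from Matrix.mul_assoc _ _ _,
      det_one_add_mul_comm, Matrix.mul_assoc]
  have hdet2 : (fromBlocks (1 + S * X * S) (S * X * Heᴴ) ((S * X * Heᴴ)ᴴ) D).det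
      = D.det * K.det := by
    rw [det_fromBlocks₂₂, invOf_eq_nonsing_inv]
  have hdetD : D.det ≠ 0 := hD.det_pos.ne'
  have hK : K.det = (1 + Hb * X * Hbᴴ).det / D.det := by
    rw [eq_div_iff hdetD, ← hdet1, hdet2, mul_comm]
  exact hdY.trans (le_of_eq hK)
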